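/- Let Σ, Ω ⊆ ℝⁿ be sets of finite perimeter, λ > 0, and define the energy E(Σ) = Per(Σ) + λ·vol(Σ Δ Ω). Suppose B_r is an open ball with B_r ⊆ Ω and H^{n-1}(∂_*Σ ∩ ∂B_r) = 0. Then E(Σ ∪ B_r) - E(Σ) = -H^{n-1}(∂_*Σ ∩ (B_r)^i_*) + H^{n-1}(∂B_r ∩ Σ^o_*) - λ·vol(B_r \ Σ). -/

import Mathlib

open MeasureTheory Metric Set Filter
open scoped ENNReal Topology

variable {n : ℕ}

/-- Upper density of `A` at `x` (with normalization `rⁿ`). -/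
noncomputable def upperDens (A : Set (EuclideanSpace ℝ (Fin n)))
    (x : EuclideanSpace ℝ (Fin n)) : ℝ≥0∞ :=
  Filter.limsup (fun r : ℝ => volume (Metric.ball x r ∩ A) / ENNReal.ofReal (r ^ n)) (𝓝[>] 0)

/-- Measure-theoretic boundary `∂_* A`. -/
def mtBoundary (A : Set (EuclideanSpace ℝ (Fin n))) : Set (EuclideanSpace ℝ (Fin n)) :=
  {x | 0 < upperDens A x ∧ 0 < upperDens Aᶜ x}

/-- Measure-theoretic interior `A^i_*`. -/
def mtInterior (A : Set (EuclideanSpace ℝ (Fin n))) : Set (EuclideanSpace ℝ (Fin n)) :=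
  {x | upperDens Aᶜ x = 0}

/-- Measure-theoretic exterior `A^o_*`. -/
def mtExterior (A : Set (EuclideanSpace ℝ (Fin n))) : Set (EuclideanSpace ℝ (Fin n)) :=
  {x | upperDens A x = 0}

/-- The flat-norm energy `E(Σ) = Per(Σ) + λ·vol(Σ Δ Ω)`, where the perimeter is
`H^{n-1}` of the measure-theoretic boundary. -/
noncomputable def fnEnergy (lam : ℝ) (Om S : Set (EuclideanSpace ℝ (Fin n))) : ℝ≥0∞ :=
  μH[(n : ℝ) - 1] (mtBoundary S) + ENNReal.ofReal lam * volume ((S \ Om) ∪ (Om \ S))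

/-! ### Auxiliary lemmas -/

lemma my_limsup_add_le {ι : Type*} {F : Filter ι} (u v : ι → ℝ≥0∞) :
    Filter.limsup (fun i => u i + v i) F ≤ Filter.limsup u F + Filter.limsup v F := by
  set a := Filter.limsup u F with ha'
  set b := Filter.limsup v F with hb'
  rcases eq_top_or_lt_top a with ha | ha
  · simp [ha]
  rcases eq_top_or_lt_top b with hb | hb
  · simp [hb]
  refine ENNReal.le_of_forall_pos_le_add fun ε hε _ ↦ ?_
  have hc : (ε : ℝ≥0∞) / 2 ≠ 0 := by
    simp [ENNReal.div_eq_zero_iff, hε.ne']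
  have hu : ∀ᶠ i in F, u i < a + ε / 2 :=
    eventually_lt_of_limsup_lt (ENNReal.lt_add_right ha.ne hc)
  have hv : ∀ᶠ i in F, v i < b + ε / 2 :=
    eventually_lt_of_limsup_lt (ENNReal.lt_add_right hb.ne hc)
  refine limsup_le_of_le (by isBoundedDefault) ?_
  filter_upwards [hu, hv] with i h1 h2
  calc u i + v i ≤ (a + ε/2) + (b + ε/2) := add_le_add h1.le h2.le
    _ = a + b + ε := by rw [add_add_add_comm, ENNReal.add_halves]

lemma upperDens_mono {A A' : Set (EuclideanSpace ℝ (Fin n))} (h : A ⊆ A')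
    (x : EuclideanSpace ℝ (Fin n)) : upperDens A x ≤ upperDens A' x :=
  limsup_le_limsup (Eventually.of_forall fun r =>
    ENNReal.div_le_div_right (measure_mono (inter_subset_inter_right _ h)) _)

lemma upperDens_le_add {A A₁ A₂ : Set (EuclideanSpace ℝ (Fin n))} (h : A ⊆ A₁ ∪ A₂)
    (x : EuclideanSpace ℝ (Fin n)) :
    upperDens A x ≤ upperDens A₁ x + upperDens A₂ x := by
  refine le_trans ?_ (my_limsup_add_le _ _)
  refine limsup_le_limsup (Eventually.of_forall fun r => ?_)
  have hm : volume (Metric.ball x r ∩ A) ≤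
      volume (Metric.ball x r ∩ A₁) + volume (Metric.ball x r ∩ A₂) := by
    refine le_trans (measure_mono ?_) (measure_union_le _ _)
    rw [← inter_union_distrib_left]
    exact inter_subset_inter_right _ h
  calc volume (Metric.ball x r ∩ A) / ENNReal.ofReal (r ^ n)
      ≤ (volume (Metric.ball x r ∩ A₁) + volume (Metric.ball x r ∩ A₂)) / ENNReal.ofReal (r ^ n) :=
        ENNReal.div_le_div_right hm _
    _ = _ := ENNReal.add_div

lemma upperDens_zero_of_disj {A : Set (EuclideanSpace ℝ (Fin n))}
    {x : EuclideanSpace ℝ (Fin n)} {ε : ℝ} (hε : 0 < ε)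
    (h : Metric.ball x ε ∩ A = ∅) : upperDens A x = 0 := by
  refine le_antisymm ?_ zero_le
  refine limsup_le_of_le (by isBoundedDefault) ?_
  filter_upwards [Ioo_mem_nhdsGT_of_mem ⟨le_rfl, hε⟩] with r hrIoo
  have hempty : Metric.ball x r ∩ A = ∅ := by
    refine eq_empty_of_subset_empty ?_
    rw [← h]
    exact inter_subset_inter_left _ (Metric.ball_subset_ball hrIoo.2.le)
  simp [hempty]

lemma upperDens_congr {A A' : Set (EuclideanSpace ℝ (Fin n))}
    {x : EuclideanSpace ℝ (Fin n)} {ε : ℝ} (hε : 0 < ε)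
    (h : Metric.ball x ε ∩ A = Metric.ball x ε ∩ A') : upperDens A x = upperDens A' x := by
  refine limsup_congr ?_
  filter_upwards [Ioo_mem_nhdsGT_of_mem ⟨le_rfl, hε⟩] with r hrIoo
  have hsub : Metric.ball x r ⊆ Metric.ball x ε := Metric.ball_subset_ball hrIoo.2.le
  have heq : Metric.ball x r ∩ A = Metric.ball x r ∩ A' := by
    have h1 : Metric.ball x r ∩ A = Metric.ball x r ∩ (Metric.ball x ε ∩ A) := by
      rw [← inter_assoc, inter_eq_self_of_subset_left hsub]
    have h2 : Metric.ball x r ∩ A' = Metric.ball x r ∩ (Metric.ball x ε ∩ A') := by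
      rw [← inter_assoc, inter_eq_self_of_subset_left hsub]
    rw [h1, h, ← h2]
  rw [heq]

lemma upperDens_pos_of_balls [Nontrivial (EuclideanSpace ℝ (Fin n))]
    {A : Set (EuclideanSpace ℝ (Fin n))} {x : EuclideanSpace ℝ (Fin n)} {ε : ℝ} (hε : 0 < ε)
    (h : ∀ ρ : ℝ, 0 < ρ → ρ < ε →
      ∃ p, Metric.ball p (ρ/2) ⊆ Metric.ball x ρ ∩ A) :
    0 < upperDens A x := by
  set c : ℝ≥0∞ := ENNReal.ofReal (((2:ℝ)^n)⁻¹) *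
    volume (Metric.ball (0 : EuclideanSpace ℝ (Fin n)) 1) with hc'
  have hvol : 0 < volume (Metric.ball (0 : EuclideanSpace ℝ (Fin n)) 1) :=
    measure_ball_pos _ _ one_pos
  have hc : 0 < c := ENNReal.mul_pos (ENNReal.ofReal_pos.2 (by positivity)).ne' hvol.ne'
  refine lt_of_lt_of_le hc ?_
  have hlim : Filter.limsup (fun _ : ℝ => c) (𝓝[>] (0:ℝ)) = c := limsup_const c
  rw [← hlim]
  refine limsup_le_limsup ?_
  filter_upwards [Ioo_mem_nhdsGT_of_mem ⟨le_rfl, hε⟩] with ρ hρ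
  obtain ⟨p, hp⟩ := h ρ hρ.1 hρ.2
  have hρ0 : (0:ℝ) < ρ := hρ.1
  have hμ : ENNReal.ofReal ((ρ/2) ^ n) * volume (Metric.ball (0 : EuclideanSpace ℝ (Fin n)) 1)
      ≤ volume (Metric.ball x ρ ∩ A) := by
    have hfr : ENNReal.ofReal ((ρ/2) ^ n) =
        ENNReal.ofReal ((ρ/2) ^ Module.finrank ℝ (EuclideanSpace ℝ (Fin n))) := by
      rw [finrank_euclideanSpace_fin]
    rw [hfr, ← Measure.addHaar_ball volume p (by positivity : (0:ℝ) ≤ ρ/2)]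
    exact measure_mono hp
  have e1 : ENNReal.ofReal ((ρ/2) ^ n) =
      ENNReal.ofReal (ρ ^ n) * ENNReal.ofReal (((2:ℝ)^n)⁻¹) := by
    rw [← ENNReal.ofReal_mul (by positivity), div_pow, div_eq_mul_inv]
  have ha0 : ENNReal.ofReal (ρ ^ n) ≠ 0 := (ENNReal.ofReal_pos.2 (by positivity)).ne'
  have haT : ENNReal.ofReal (ρ ^ n) ≠ ⊤ := ENNReal.ofReal_ne_top
  calc c = ENNReal.ofReal (ρ ^ n) * c / ENNReal.ofReal (ρ ^ n) := by
        rw [mul_comm, mul_div_assoc, ENNReal.div_self ha0 haT, mul_one]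
    _ ≤ volume (Metric.ball x ρ ∩ A) / ENNReal.ofReal (ρ ^ n) := by
        refine ENNReal.div_le_div_right ?_ _
        rw [hc', ← mul_assoc, ← e1]
        exact hμ

lemma exists_ball_inside (x₀ y : EuclideanSpace ℝ (Fin n)) {r ρ : ℝ} (hr : 0 < r)
    (hy : dist y x₀ = r) (hρ : 0 < ρ) (hρr : ρ < r) :
    ∃ p, Metric.ball p (ρ/2) ⊆ Metric.ball y ρ ∩ Metric.ball x₀ r := by
  set c : ℝ := ρ / (2*r) with hcdef
  have hc0 : 0 < c := by positivity
  have hc1 : c < 1 := by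
    rw [hcdef, div_lt_one (by positivity)]
    linarith
  refine ⟨y + c • (x₀ - y), fun z hz => ?_⟩
  have hnorm : ‖y - x₀‖ = r := by rw [← dist_eq_norm, hy]
  have hd1 : dist (y + c • (x₀ - y)) y = ρ/2 := by
    rw [dist_eq_norm]
    have e : y + c • (x₀ - y) - y = (-c) • (y - x₀) := by module
    rw [e, norm_smul, hnorm, Real.norm_eq_abs, abs_neg, abs_of_pos hc0]
    rw [hcdef]; field_simp
  have hd2 : dist (y + c • (x₀ - y)) x₀ = r - ρ/2 := by
    rw [dist_eq_norm]
    have e : y + c • (x₀ - y) - x₀ = (1 - c) • (y - x₀) := by module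
    rw [e, norm_smul, hnorm, Real.norm_eq_abs, abs_of_pos (by linarith)]
    rw [hcdef]; field_simp
  rw [Metric.mem_ball] at hz
  constructor
  · rw [Metric.mem_ball]
    calc dist z y ≤ dist z (y + c • (x₀ - y)) + dist (y + c • (x₀ - y)) y := dist_triangle _ _ _
      _ < ρ/2 + ρ/2 := by rw [hd1]; linarith
      _ = ρ := by ring
  · rw [Metric.mem_ball]
    calc dist z x₀ ≤ dist z (y + c • (x₀ - y)) + dist (y + c • (x₀ - y)) x₀ := dist_triangle _ _ _
      _ < ρ/2 + (r - ρ/2) := by rw [hd2]; linarith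
      _ = r := by ring

lemma exists_ball_outside (x₀ y : EuclideanSpace ℝ (Fin n)) {r ρ : ℝ} (hr : 0 < r)
    (hy : dist y x₀ = r) (hρ : 0 < ρ) :
    ∃ p, Metric.ball p (ρ/2) ⊆ Metric.ball y ρ ∩ (Metric.closedBall x₀ r)ᶜ := by
  set c : ℝ := ρ / (2*r) with hcdef
  have hc0 : 0 < c := by positivity
  refine ⟨y - c • (x₀ - y), fun z hz => ?_⟩
  have hnorm : ‖y - x₀‖ = r := by rw [← dist_eq_norm, hy]
  have hd1 : dist (y - c • (x₀ - y)) y = ρ/2 := by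
    rw [dist_eq_norm]
    have e : y - c • (x₀ - y) - y = c • (y - x₀) := by module
    rw [e, norm_smul, hnorm, Real.norm_eq_abs, abs_of_pos hc0]
    rw [hcdef]; field_simp
  have hd2 : dist (y - c • (x₀ - y)) x₀ = r + ρ/2 := by
    rw [dist_eq_norm]
    have e : y - c • (x₀ - y) - x₀ = (1 + c) • (y - x₀) := by module
    rw [e, norm_smul, hnorm, Real.norm_eq_abs, abs_of_pos (by linarith)]
    rw [hcdef]; field_simp
  rw [Metric.mem_ball] at hz
  constructor
  · rw [Metric.mem_ball]
    calc dist z y ≤ dist z (y - c • (x₀ - y)) + dist (y - c • (x₀ - y)) y := dist_triangle _ _ _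
      _ < ρ/2 + ρ/2 := by rw [hd1]; linarith
      _ = ρ := by ring
  · intro hmem
    rw [mem_closedBall] at hmem
    have ht : dist (y - c • (x₀ - y)) x₀ ≤ dist (y - c • (x₀ - y)) z + dist z x₀ :=
      dist_triangle _ _ _
    rw [hd2, dist_comm] at ht
    linarith

lemma upperDens_ball_pos_of_sphere {x y : EuclideanSpace ℝ (Fin n)} {r : ℝ} (hr : 0 < r)
    (hy : dist y x = r) : 0 < upperDens (Metric.ball x r) y := by
  have hne : y ≠ x := fun h => by rw [h, dist_self] at hy; exact hr.ne hy
  haveI : Nontrivial (EuclideanSpace ℝ (Fin n)) := nontrivial_of_ne y x hne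
  exact upperDens_pos_of_balls hr (fun ρ h1 h2 => exists_ball_inside x y hr hy h1 h2)

lemma upperDens_ball_compl_pos_of_sphere {x y : EuclideanSpace ℝ (Fin n)} {r : ℝ} (hr : 0 < r)
    (hy : dist y x = r) : 0 < upperDens (Metric.ball x r)ᶜ y := by
  have hne : y ≠ x := fun h => by rw [h, dist_self] at hy; exact hr.ne hy
  haveI : Nontrivial (EuclideanSpace ℝ (Fin n)) := nontrivial_of_ne y x hne
  refine upperDens_pos_of_balls hr (fun ρ h1 _ => ?_)
  obtain ⟨p, hp⟩ := exists_ball_outside x y hr hy h1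
  exact ⟨p, hp.trans (inter_subset_inter_right _
    (compl_subset_compl.2 Metric.ball_subset_closedBall))⟩

lemma upperDens_ball_compl_pos_of_far {x y : EuclideanSpace ℝ (Fin n)} {r : ℝ} (hr : 0 < r)
    (hy : r < dist y x) : 0 < upperDens (Metric.ball x r)ᶜ y := by
  have hne : y ≠ x := fun h => by rw [h, dist_self] at hy; linarith
  haveI : Nontrivial (EuclideanSpace ℝ (Fin n)) := nontrivial_of_ne y x hne
  refine upperDens_pos_of_balls (ε := dist y x - r) (by linarith) (fun ρ h1 h2 => ⟨y, ?_⟩)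
  intro z hz
  rw [Metric.mem_ball] at hz
  refine ⟨Metric.mem_ball.2 (by linarith), fun hzB => ?_⟩
  rw [Metric.mem_ball] at hzB
  have : dist y x ≤ dist y z + dist z x := dist_triangle _ _ _
  rw [dist_comm y z] at this
  linarith

lemma mtInterior_ball (x : EuclideanSpace ℝ (Fin n)) {r : ℝ} (hr : 0 < r) :
    mtInterior (Metric.ball x r) = Metric.ball x r := by
  ext y
  simp only [mtInterior, mem_setOf_eq]
  constructor
  · intro h
    by_contra hy
    rw [Metric.mem_ball, not_lt] at hy
    rcases eq_or_lt_of_le hy with heq | hlt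
    · exact (upperDens_ball_compl_pos_of_sphere hr heq.symm).ne' h
    · exact (upperDens_ball_compl_pos_of_far hr hlt).ne' h
  · intro hy
    obtain ⟨ε, hε, hsub⟩ := Metric.exists_ball_subset_ball hy
    refine upperDens_zero_of_disj hε ?_
    rw [eq_empty_iff_forall_notMem]
    exact fun z hz => hz.2 (hsub hz.1)

theorem energy_change_of_adding_ball
    (S Om : Set (EuclideanSpace ℝ (Fin n))) (hS : MeasurableSet S) (hOm : MeasurableSet Om)
    (hPerS : μH[(n : ℝ) - 1] (mtBoundary S) < ⊤)
    (hPerOm : μH[(n : ℝ) - 1] (mtBoundary Om) < ⊤)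
    (lam : ℝ) (hlam : 0 < lam)
    (x : EuclideanSpace ℝ (Fin n)) (r : ℝ) (hr : 0 < r)
    (hball : Metric.ball x r ⊆ Om)
    (hnull : μH[(n : ℝ) - 1] (mtBoundary S ∩ Metric.sphere x r) = 0) :
    fnEnergy lam Om (S ∪ Metric.ball x r) +
        μH[(n : ℝ) - 1] (mtBoundary S ∩ mtInterior (Metric.ball x r)) +
        ENNReal.ofReal lam * volume (Metric.ball x r \ S) =
      fnEnergy lam Om S + μH[(n : ℝ) - 1] (Metric.sphere x r ∩ mtExterior S) := by
  set B := Metric.ball x r with hB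
  set μ : Measure (EuclideanSpace ℝ (Fin n)) := μH[(n : ℝ) - 1] with hμ
  -- splitting of the Hausdorff measure along ball / sphere / complement of closed ball
  have hsplit : ∀ A : Set (EuclideanSpace ℝ (Fin n)),
      μ A = μ (A ∩ B) + μ (A ∩ Metric.sphere x r) + μ (A \ Metric.closedBall x r) := by
    intro A
    have h1 := measure_inter_add_diff (μ := μ) A (measurableSet_closedBall (x := x) (ε := r))
    have h2 := measure_inter_add_diff (μ := μ) (A ∩ Metric.closedBall x r) (measurableSet_ball (x := x) (ε := r))
    have e1 : A ∩ Metric.closedBall x r ∩ B = A ∩ B := by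
      rw [inter_assoc, inter_eq_self_of_subset_right Metric.ball_subset_closedBall]
    have e2 : (A ∩ Metric.closedBall x r) \ B = A ∩ Metric.sphere x r := by
      rw [inter_diff_assoc, Metric.closedBall_diff_ball]
    calc μ A = μ (A ∩ Metric.closedBall x r) + μ (A \ Metric.closedBall x r) := h1.symm
      _ = μ (A ∩ Metric.closedBall x r ∩ B) + μ ((A ∩ Metric.closedBall x r) \ B)
            + μ (A \ Metric.closedBall x r) := by rw [h2]
      _ = _ := by rw [e1, e2]
  -- (A) the boundary of S ∪ B does not meet B
  have hA : mtBoundary (S ∪ B) ∩ B = ∅ := by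
    rw [eq_empty_iff_forall_notMem]
    rintro y ⟨⟨-, hpos⟩, hyB⟩
    obtain ⟨ε, hε, hsub⟩ := Metric.exists_ball_subset_ball hyB
    have : upperDens (S ∪ B)ᶜ y = 0 := by
      refine upperDens_zero_of_disj hε ?_
      rw [eq_empty_iff_forall_notMem]
      exact fun z hz => hz.2 (Or.inr (hsub hz.1))
    exact hpos.ne' this
  -- (B) outside the closed ball the boundaries agree
  have hcongr_out : ∀ y : EuclideanSpace ℝ (Fin n), r < dist y x →
      upperDens (S ∪ B) y = upperDens S y ∧ upperDens (S ∪ B)ᶜ y = upperDens Sᶜ y := by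
    intro y hy
    have hε : (0:ℝ) < dist y x - r := by linarith
    have hdisj : Metric.ball y (dist y x - r) ∩ B = ∅ := by
      rw [eq_empty_iff_forall_notMem]
      rintro z ⟨hz1, hz2⟩
      rw [Metric.mem_ball] at hz1
      rw [hB, Metric.mem_ball] at hz2
      have := dist_triangle y z x
      rw [dist_comm y z] at this
      linarith
    have hsubc : Metric.ball y (dist y x - r) ⊆ Bᶜ := by
      intro z hz hzB
      rw [eq_empty_iff_forall_notMem] at hdisj
      exact hdisj z ⟨hz, hzB⟩
    constructor
    · refine upperDens_congr hε ?_
      rw [inter_union_distrib_left, hdisj, union_empty]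
    · refine upperDens_congr hε ?_
      rw [compl_union, ← inter_assoc,
        inter_eq_self_of_subset_left ((inter_subset_left).trans hsubc)]
  have hBout : mtBoundary (S ∪ B) \ Metric.closedBall x r
      = mtBoundary S \ Metric.closedBall x r := by
    ext y
    simp only [mem_diff, Metric.mem_closedBall, not_le]
    constructor
    · rintro ⟨⟨h1, h2⟩, hy⟩
      obtain ⟨e1, e2⟩ := hcongr_out y hy
      exact ⟨⟨e1 ▸ h1, e2 ▸ h2⟩, hy⟩
    · rintro ⟨⟨h1, h2⟩, hy⟩
      obtain ⟨e1, e2⟩ := hcongr_out y hy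
      exact ⟨⟨e1.symm ▸ h1, e2.symm ▸ h2⟩, hy⟩
  -- (C) the sphere part
  have hC1 : Metric.sphere x r ∩ mtExterior S ⊆ mtBoundary (S ∪ B) ∩ Metric.sphere x r := by
    rintro y ⟨hys, hyext⟩
    rw [mem_sphere_iff_norm] at hys
    have hyd : dist y x = r := by rwa [dist_eq_norm]
    have hSy : upperDens S y = 0 := hyext
    refine ⟨⟨?_, ?_⟩, by rwa [Metric.mem_sphere]⟩
    · exact lt_of_lt_of_le (upperDens_ball_pos_of_sphere hr hyd)
        (upperDens_mono subset_union_right y)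
    · rw [compl_union]
      have hsub : Bᶜ ⊆ (Sᶜ ∩ Bᶜ) ∪ S := by
        intro z hz
        by_cases hzS : z ∈ S
        · exact Or.inr hzS
        · exact Or.inl ⟨hzS, hz⟩
      have := upperDens_le_add hsub y
      rw [hSy, add_zero] at this
      exact lt_of_lt_of_le (upperDens_ball_compl_pos_of_sphere hr hyd) this
  have hC2 : mtBoundary (S ∪ B) ∩ Metric.sphere x r ⊆
      (Metric.sphere x r ∩ mtExterior S) ∪ (mtBoundary S ∩ Metric.sphere x r) := by
    rintro y ⟨⟨h1, h2⟩, hys⟩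
    by_cases hS0 : upperDens S y = 0
    · exact Or.inl ⟨hys, hS0⟩
    · refine Or.inr ⟨⟨pos_iff_ne_zero.2 hS0, ?_⟩, hys⟩
      rw [compl_union] at h2
      exact lt_of_lt_of_le h2 (upperDens_mono inter_subset_left y)
  have hCsphere : μ (mtBoundary (S ∪ B) ∩ Metric.sphere x r)
      = μ (Metric.sphere x r ∩ mtExterior S) := by
    refine le_antisymm ?_ (measure_mono hC1)
    calc μ (mtBoundary (S ∪ B) ∩ Metric.sphere x r)
        ≤ μ ((Metric.sphere x r ∩ mtExterior S) ∪ (mtBoundary S ∩ Metric.sphere x r)) :=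
          measure_mono hC2
      _ ≤ μ (Metric.sphere x r ∩ mtExterior S) + μ (mtBoundary S ∩ Metric.sphere x r) :=
          measure_union_le _ _
      _ = μ (Metric.sphere x r ∩ mtExterior S) := by rw [hnull, add_zero]
  -- perimeter identities
  have hper1 : μ (mtBoundary (S ∪ B)) =
      μ (Metric.sphere x r ∩ mtExterior S) + μ (mtBoundary S \ Metric.closedBall x r) := by
    rw [hsplit (mtBoundary (S ∪ B)), hA, hCsphere, hBout, measure_empty, zero_add]
  have hper2 : μ (mtBoundary S) =
      μ (mtBoundary S ∩ B) + μ (mtBoundary S \ Metric.closedBall x r) := by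
    rw [hsplit (mtBoundary S), hnull, add_zero]
  -- volume identity
  have hvolid : volume ((S \ Om) ∪ (Om \ S)) =
      volume (((S ∪ B) \ Om) ∪ (Om \ (S ∪ B))) + volume (B \ S) := by
    have hset : (S \ Om) ∪ (Om \ S) = (((S ∪ B) \ Om) ∪ (Om \ (S ∪ B))) ∪ (B \ S) := by
      ext z
      have hz := @hball z
      simp only [mem_union, mem_diff, hB]
      tauto
    have hdisj : Disjoint (((S ∪ B) \ Om) ∪ (Om \ (S ∪ B))) (B \ S) := by
      rw [disjoint_left]
      rintro z (⟨-, hz2⟩ | ⟨-, hz2⟩) ⟨hzB, hzS⟩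
      · exact hz2 (hball hzB)
      · exact hz2 (Or.inr hzB)
    rw [hset, measure_union hdisj ((measurableSet_ball).diff hS)]
  -- put everything together
  rw [fnEnergy, fnEnergy, mtInterior_ball x hr, ← hB, ← hμ, hper1, hper2, hvolid, mul_add]
  ring
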